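/- Let G be a group containing two distinct elements x and y with xyx = yxy. Then G is not bi-orderable; i.e., G admits no strict linear order invariant under both left and right multiplication. -/

import Mathlib

/-- A group containing two distinct elements `x, y` with `xyx = yxy` is not bi-orderable. -/
theorem not_biorderable_of_braid_relation (G : Type*) [Group G] (x y : G)
    (hne : x ≠ y) (hbraid : x * y * x = y * x * y) :
    ¬ ∃ r : G → G → Prop, IsStrictTotalOrder G r ∧
        (∀ a b c : G, r a b → r (c * a) (c * b)) ∧
        (∀ a b c : G, r a b → r (a * c) (b * c)) := by
  rintro ⟨r, hsto, hl, hr⟩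
  have key : ∀ a b : G, a * b * a = b * a * b → r a b → False := by
    intro a b hb hab
    -- r (b*a) (a*b)
    have h1 : r (b * a * a) (b * (a * b)) := by
      have := hl a b (b * a) hab
      simpa [mul_assoc] using this
    have h1' : r (b * a * a) (a * b * a) := by
      rw [show b * (a * b) = b * a * b by rw [mul_assoc], ← hb] at h1
      exact h1
    have h1'' : r (b * a * a * a⁻¹) (a * b * a * a⁻¹) := hr _ _ _ h1'
    have hba : r (b * a) (a * b) := by
      simpa [mul_assoc] using h1''
    -- r (a*b) (b*a)
    have h2 : r (a * (a * b)) (b * (a * b)) := hr a b (a * b) hab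
    have h2' : r (a * (a * b)) (a * (b * a)) := by
      rw [show b * (a * b) = b * a * b by rw [mul_assoc], ← hb,
        show a * b * a = a * (b * a) by rw [mul_assoc]] at h2
      exact h2
    have h2'' : r (a⁻¹ * (a * (a * b))) (a⁻¹ * (a * (b * a))) := hl _ _ _ h2'
    have hab2 : r (a * b) (b * a) := by
      simpa [mul_assoc] using h2''
    exact hsto.irrefl _ (hsto.trans _ _ _ hab2 hba)
  have htri : r x y ∨ x = y ∨ r y x := by
    by_cases h1 : r x y
    · exact Or.inl h1
    by_cases h2 : r y x
    · exact Or.inr (Or.inr h2)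
    exact Or.inr (Or.inl (hsto.trichotomous x y h1 h2))
  rcases htri with h | h | h
  · exact key x y hbraid h
  · exact hne h
  · exact key y x hbraid.symm h
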